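/- arXiv:2007.03986 — 2 statements merged into one kernel-verified Lean document; each statement's English description precedes it below -/
import Mathlib

section
/- Let {AB, CD} be a proper pair of oriented prime segments in the grid G, and let f = f_AB ∧ f_CD be the 2-threshold function they define. Then each of the four points A, B, C, D is an essential point of f with respect to the class of 2-threshold functions on G: the function that differs from f only at that point is still a 2-threshold function. -/
/-- Cast an integer point to the real plane. -/
def toR (p : ℤ × ℤ) : ℝ × ℝ := ((p.1 : ℝ), (p.2 : ℝ))

/-- Signed area determinant Δ(P,Q,R). -/
def Det (P Q R : ℤ × ℤ) : ℤ :=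
  (Q.1 - P.1) * (R.2 - P.2) - (Q.2 - P.2) * (R.1 - P.1)

/-- Two integer points are adjacent: distinct, and the segment between them
contains no integer point other than the endpoints. -/
def Adjacent (A B : ℤ × ℤ) : Prop :=
  A ≠ B ∧ ∀ C : ℤ × ℤ, toR C ∈ segment ℝ (toR A) (toR B) → C = A ∨ C = B

/-- The {0,1}-valued (Bool-valued) function defined by the oriented prime
segment AB: on the line through A and B it is true iff the point is strictly
closer to A than to B; off the line it is true iff triangle A B X is
counterclockwise. -/
def fseg (A B X : ℤ × ℤ) : Bool :=
  if Det A B X = 0 then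
    decide ((X.1 - A.1) ^ 2 + (X.2 - A.2) ^ 2 < (X.1 - B.1) ^ 2 + (X.2 - B.2) ^ 2)
  else
    decide (0 < Det A B X)

/-- The grid {0,…,m−1} × {0,…,n−1} as a set of integer points. -/
def Grid (m n : ℕ) : Set (ℤ × ℤ) :=
  {p | 0 ≤ p.1 ∧ p.1 < (m : ℤ) ∧ 0 ≤ p.2 ∧ p.2 < (n : ℤ)}

/-- A pair of oriented prime segments (A,B), (C,D) is proper. -/
def ProperPair (A B C D : ℤ × ℤ) : Prop :=
  Adjacent A B ∧ Adjacent C D ∧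
    fseg C D A = true ∧ fseg C D B = true ∧ fseg A B C = true ∧ fseg A B D = true

/-- f is a threshold function on the grid. -/
def IsThreshold (m n : ℕ) (f : ℤ × ℤ → Bool) : Prop :=
  ∃ a0 a1 a2 : ℝ, ∀ p ∈ Grid m n,
    (f p = true ↔ a1 * (p.1 : ℝ) + a2 * (p.2 : ℝ) ≥ a0)

/-- f is a 2-threshold function on the grid: a conjunction of two threshold
functions. -/
def Is2Threshold (m n : ℕ) (f : ℤ × ℤ → Bool) : Prop :=
  ∃ g h : ℤ × ℤ → Bool, IsThreshold m n g ∧ IsThreshold m n h ∧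
    ∀ p ∈ Grid m n, f p = (g p && h p)


-- Auxiliary lemmas

lemma adj_coprime' {A B : ℤ × ℤ} (h : Adjacent A B) {u v : ℤ}
    (hu : u = B.1 - A.1) (hv : v = B.2 - A.2) : IsCoprime u v := by
  have hne : A ≠ B := h.1
  have huv : ¬(u = 0 ∧ v = 0) := by
    rintro ⟨h1, h2⟩
    exact hne (Prod.ext (by omega) (by omega))
  rw [Int.isCoprime_iff_gcd_eq_one]
  by_contra hg
  set d : ℤ := (Int.gcd u v : ℤ) with hd
  have hdvdu : d ∣ u := Int.gcd_dvd_left u v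
  have hdvdv : d ∣ v := Int.gcd_dvd_right u v
  have hd0 : d ≠ 0 := by
    simp only [hd, ne_eq, Int.natCast_eq_zero, Int.gcd_eq_zero_iff]
    tauto
  have hdnn : 0 ≤ d := Int.natCast_nonneg _
  have hd2 : 2 ≤ d := by
    rcases lt_or_ge d 2 with h2 | h2
    · exfalso; apply hg; omega
    · exact h2
  have hud : d * (u / d) = u := Int.mul_ediv_cancel' hdvdu
  have hvd : d * (v / d) = v := Int.mul_ediv_cancel' hdvdv
  have hdR1 : (1:ℝ) ≤ (d:ℝ) := by exact_mod_cast (by omega : (1:ℤ) ≤ d)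
  have hdRpos : (0:ℝ) < (d:ℝ) := by linarith
  have hdR : (d:ℝ) ≠ 0 := ne_of_gt hdRpos
  have hcu : ((u / d : ℤ) : ℝ) = (u : ℝ) / (d : ℝ) := by
    rw [eq_div_iff hdR]
    exact_mod_cast (by linarith [hud] : (u/d) * d = u)
  have hcv : ((v / d : ℤ) : ℝ) = (v : ℝ) / (d : ℝ) := by
    rw [eq_div_iff hdR]
    exact_mod_cast (by linarith [hvd] : (v/d) * d = v)
  have hmem : toR (A.1 + u / d, A.2 + v / d) ∈ segment ℝ (toR A) (toR B) := by
    refine ⟨1 - 1/(d:ℝ), 1/(d:ℝ), ?_, by positivity, by ring, ?_⟩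
    · have h1 : 1/(d:ℝ) ≤ 1 := by rw [div_le_one hdRpos]; exact hdR1
      linarith
    · show (1 - 1/(d:ℝ)) • toR A + (1/(d:ℝ)) • toR B = _
      simp only [toR, Prod.smul_mk, smul_eq_mul, Prod.mk_add_mk, Prod.mk.injEq]
      subst hu hv
      constructor <;> push_cast [hcu, hcv] <;> field_simp <;> push_cast <;> ring
  rcases h.2 _ hmem with hCA | hCB
  · have h1 : A.1 + u / d = A.1 := congrArg Prod.fst hCA
    have h2 : A.2 + v / d = A.2 := congrArg Prod.snd hCA
    have e1 : u / d = 0 := by omega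
    have e2 : v / d = 0 := by omega
    exact huv ⟨by rw [← hud, e1, mul_zero], by rw [← hvd, e2, mul_zero]⟩
  · have h1 : A.1 + u / d = B.1 := congrArg Prod.fst hCB
    have h2 : A.2 + v / d = B.2 := congrArg Prod.snd hCB
    have e1 : u / d = u := by omega
    have e2 : v / d = v := by omega
    rw [e1] at hud
    rw [e2] at hvd
    exact huv ⟨by nlinarith, by nlinarith⟩

lemma adj_coprime {A B : ℤ × ℤ} (h : Adjacent A B) :
    IsCoprime (B.1 - A.1) (B.2 - A.2) := adj_coprime' h rfl rfl

lemma det_zero_param {A B X : ℤ × ℤ} (hco : IsCoprime (B.1 - A.1) (B.2 - A.2))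
    (hD : Det A B X = 0) :
    ∃ t : ℤ, X.1 = A.1 + t * (B.1 - A.1) ∧ X.2 = A.2 + t * (B.2 - A.2) := by
  obtain ⟨a, b, hab⟩ := hco
  have hD' : (B.1 - A.1) * (X.2 - A.2) = (B.2 - A.2) * (X.1 - A.1) := by
    simp only [Det] at hD; linarith
  refine ⟨a * (X.1 - A.1) + b * (X.2 - A.2), ?_, ?_⟩
  · linear_combination (-(X.1 - A.1)) * hab - b * hD'
  · linear_combination (-(X.2 - A.2)) * hab + a * hD'

lemma param_unique {A B : ℤ × ℤ} (hne : A ≠ B) {t t' : ℤ}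
    (h1 : A.1 + t * (B.1 - A.1) = A.1 + t' * (B.1 - A.1))
    (h2 : A.2 + t * (B.2 - A.2) = A.2 + t' * (B.2 - A.2)) : t = t' := by
  have huv : ¬(B.1 - A.1 = 0 ∧ B.2 - A.2 = 0) := by
    rintro ⟨ha, hb⟩; exact hne (Prod.ext (by omega) (by omega))
  rcases not_and_or.mp huv with h | h
  · exact mul_right_cancel₀ h (by linarith : t * (B.1 - A.1) = t' * (B.1 - A.1))
  · exact mul_right_cancel₀ h (by linarith : t * (B.2 - A.2) = t' * (B.2 - A.2))

open Classical in
noncomputable def Fk (A B : ℤ × ℤ) (k : ℤ) (X : ℤ × ℤ) : Bool :=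
  decide (0 < Det A B X ∨ (Det A B X = 0 ∧
    ∃ t : ℤ, X.1 = A.1 + t * (B.1 - A.1) ∧ X.2 = A.2 + t * (B.2 - A.2) ∧ t ≤ k))

lemma Fk_iff (A B : ℤ × ℤ) (k : ℤ) (X : ℤ × ℤ) :
    Fk A B k X = true ↔ (0 < Det A B X ∨ (Det A B X = 0 ∧
      ∃ t : ℤ, X.1 = A.1 + t * (B.1 - A.1) ∧ X.2 = A.2 + t * (B.2 - A.2) ∧ t ≤ k)) := by
  simp [Fk]

lemma det_self_left (A B : ℤ × ℤ) : Det A B A = 0 := by simp [Det]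
lemma det_self_right (A B : ℤ × ℤ) : Det A B B = 0 := by simp [Det]; ring

lemma s_pos {A B : ℤ × ℤ} (hne : A ≠ B) :
    0 < (B.1 - A.1) ^ 2 + (B.2 - A.2) ^ 2 := by
  have huv : ¬(B.1 - A.1 = 0 ∧ B.2 - A.2 = 0) := by
    rintro ⟨ha, hb⟩; exact hne (Prod.ext (by omega) (by omega))
  rcases not_and_or.mp huv with h | h <;>
    rcases lt_or_gt_of_ne h with h' | h' <;> nlinarith

lemma fseg_eq_Fk {A B : ℤ × ℤ} (hadj : Adjacent A B) (X : ℤ × ℤ) :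
    fseg A B X = Fk A B 0 X := by
  have hco := adj_coprime hadj
  have hne := hadj.1
  rw [Bool.eq_iff_iff, Fk_iff]
  by_cases hD : Det A B X = 0
  · rw [fseg, if_pos hD]
    obtain ⟨t, ht1, ht2⟩ := det_zero_param hco hD
    have hs := s_pos hne
    simp only [decide_eq_true_eq]
    constructor
    · intro hlt
      refine Or.inr ⟨hD, t, ht1, ht2, ?_⟩
      rw [ht1, ht2] at hlt
      nlinarith
    · rintro (h0 | ⟨-, t', ht1', ht2', ht'⟩)
      · omega
      · have htt : t = t' := param_unique hne (ht1 ▸ ht1') (ht2 ▸ ht2')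
        subst htt
        rw [ht1, ht2]
        nlinarith
  · rw [fseg, if_neg hD]
    simp only [decide_eq_true_eq]
    constructor
    · intro h; exact Or.inl h
    · rintro (h | ⟨h, -⟩)
      · exact h
      · exact absurd h hD

lemma Fk_agree {A B : ℤ × ℤ} (hadj : Adjacent A B) (k : ℤ) (X : ℤ × ℤ)
    (hX : ∀ t : ℤ, X.1 = A.1 + t * (B.1 - A.1) → X.2 = A.2 + t * (B.2 - A.2) →
      (t ≤ k ↔ t ≤ 0)) :
    Fk A B k X = fseg A B X := by
  rw [fseg_eq_Fk hadj, Bool.eq_iff_iff, Fk_iff, Fk_iff]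
  constructor
  · rintro (h | ⟨h, t, ht1, ht2, ht⟩)
    · exact Or.inl h
    · exact Or.inr ⟨h, t, ht1, ht2, (hX t ht1 ht2).mp ht⟩
  · rintro (h | ⟨h, t, ht1, ht2, ht⟩)
    · exact Or.inl h
    · exact Or.inr ⟨h, t, ht1, ht2, (hX t ht1 ht2).mpr ht⟩

lemma Fk_negone_agree {A B : ℤ × ℤ} (hadj : Adjacent A B) {X : ℤ × ℤ} (hX : X ≠ A) :
    Fk A B (-1) X = fseg A B X := by
  apply Fk_agree hadj
  intro t ht1 ht2
  have ht0 : t ≠ 0 := by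
    rintro rfl
    exact hX (Prod.ext (by omega) (by omega))
  omega

lemma Fk_negone_at_A {A B : ℤ × ℤ} (hadj : Adjacent A B) : Fk A B (-1) A = false := by
  rw [Bool.eq_false_iff, ne_eq, Fk_iff]
  rw [det_self_left]
  rintro (h | ⟨-, t, ht1, ht2, ht⟩)
  · omega
  · have h0 : t = 0 := param_unique hadj.1
      (by linarith : A.1 + t * (B.1 - A.1) = A.1 + 0 * (B.1 - A.1))
      (by linarith : A.2 + t * (B.2 - A.2) = A.2 + 0 * (B.2 - A.2))
    omega

lemma Fk_one_agree {A B : ℤ × ℤ} (hadj : Adjacent A B) {X : ℤ × ℤ} (hX : X ≠ B) :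
    Fk A B 1 X = fseg A B X := by
  apply Fk_agree hadj
  intro t ht1 ht2
  have ht0 : t ≠ 1 := by
    rintro rfl
    exact hX (Prod.ext (by omega) (by omega))
  omega

lemma Fk_one_at_B {A B : ℤ × ℤ} (hadj : Adjacent A B) : Fk A B 1 B = true := by
  rw [Fk_iff, det_self_right]
  exact Or.inr ⟨rfl, 1, by ring, by ring, le_refl 1⟩

lemma fseg_at_A {A B : ℤ × ℤ} (hne : A ≠ B) : fseg A B A = true := by
  rw [fseg, if_pos (det_self_left A B)]
  simp only [decide_eq_true_eq]
  have := s_pos hne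
  nlinarith

lemma fseg_at_B {A B : ℤ × ℤ} (hne : A ≠ B) : fseg A B B = false := by
  rw [fseg, if_pos (det_self_right A B)]
  simp only [decide_eq_false_iff_not, not_lt]
  have := s_pos hne
  nlinarith

lemma Fk_threshold (m n : ℕ) {A B : ℤ × ℤ} (hadj : Adjacent A B)
    (hA : A ∈ Grid m n) (k : ℤ) : IsThreshold m n (Fk A B k) := by
  obtain ⟨hp0, hpm, hq0, hqn⟩ := hA
  have hne := hadj.1
  have hco := adj_coprime hadj
  obtain ⟨u, hu⟩ : ∃ u : ℤ, u = B.1 - A.1 := ⟨_, rfl⟩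
  obtain ⟨v, hv⟩ : ∃ v : ℤ, v = B.2 - A.2 := ⟨_, rfl⟩
  obtain ⟨p, hp⟩ : ∃ p : ℤ, p = A.1 := ⟨_, rfl⟩
  obtain ⟨q, hq⟩ : ∃ q : ℤ, q = A.2 := ⟨_, rfl⟩
  obtain ⟨s, hs⟩ : ∃ s : ℤ, s = u ^ 2 + v ^ 2 := ⟨_, rfl⟩
  obtain ⟨N, hN⟩ : ∃ N : ℤ, N = (|u| + |v|) * ((m : ℤ) + n) + (|k| + 1) * s + 1 := ⟨_, rfl⟩
  obtain ⟨a1z, ha1⟩ : ∃ a : ℤ, a = -2 * (N * v + u) := ⟨_, rfl⟩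
  obtain ⟨a2z, ha2⟩ : ∃ a : ℤ, a = 2 * (N * u - v) := ⟨_, rfl⟩
  obtain ⟨a0z, ha0⟩ : ∃ a : ℤ, a = (-2 * k - 1) * s + a1z * p + a2z * q := ⟨_, rfl⟩
  refine ⟨(a0z : ℝ), (a1z : ℝ), (a2z : ℝ), ?_⟩
  rintro X ⟨hx0, hxm, hy0, hyn⟩
  obtain ⟨x, hx⟩ : ∃ x : ℤ, x = X.1 := ⟨_, rfl⟩
  obtain ⟨y, hy⟩ : ∃ y : ℤ, y = X.2 := ⟨_, rfl⟩
  rw [← hx] at hx0 hxm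
  rw [← hy] at hy0 hyn
  rw [← hp] at hp0 hpm
  rw [← hq] at hq0 hqn
  rw [show X.1 = x from hx.symm, show X.2 = y from hy.symm]
  have hcast : ((a1z : ℝ) * (x : ℝ) + (a2z : ℝ) * (y : ℝ) ≥ (a0z : ℝ)) ↔
      a0z ≤ a1z * x + a2z * y := by
    rw [ge_iff_le]
    constructor <;> intro h <;> exact_mod_cast h
  rw [Fk_iff, hcast]
  have hDet : Det A B X = u * (y - q) - v * (x - p) := by
    rw [hu, hv, hp, hq, hx, hy]; rfl
  have hspos : 0 < s := by rw [hs, hu, hv]; exact s_pos hne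
  have hLpar : ∀ t : ℤ, (X.1 = A.1 + t * (B.1 - A.1) ∧ X.2 = A.2 + t * (B.2 - A.2)) ↔
      (x = p + t * u ∧ y = q + t * v) := by
    intro t; rw [hu, hv, hp, hq, hx, hy]
  have hs1 : (1 : ℤ) ≤ s := hspos
  have hxabs : |x - p| ≤ (m : ℤ) := by rw [abs_le]; omega
  have hyabs : |y - q| ≤ (n : ℤ) := by rw [abs_le]; omega
  have hub : u * (x - p) ≤ |u| * m :=
    le_trans (le_abs_self _)
      (by rw [abs_mul]; exact mul_le_mul_of_nonneg_left hxabs (abs_nonneg u))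
  have hlb : -(|u| * m) ≤ u * (x - p) := by
    have h2 : |u * (x - p)| ≤ |u| * m := by
      rw [abs_mul]; exact mul_le_mul_of_nonneg_left hxabs (abs_nonneg u)
    linarith [neg_abs_le (u * (x - p))]
  have hub' : v * (y - q) ≤ |v| * n :=
    le_trans (le_abs_self _)
      (by rw [abs_mul]; exact mul_le_mul_of_nonneg_left hyabs (abs_nonneg v))
  have hlb' : -(|v| * n) ≤ v * (y - q) := by
    have h2 : |v * (y - q)| ≤ |v| * n := by
      rw [abs_mul]; exact mul_le_mul_of_nonneg_left hyabs (abs_nonneg v)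
    linarith [neg_abs_le (v * (y - q))]
  have hunn : 0 ≤ |u| := abs_nonneg u
  have hvnn : 0 ≤ |v| := abs_nonneg v
  have hknn : 0 ≤ |k| := abs_nonneg k
  have hkabs1 : -k ≤ |k| := neg_le_abs k
  have hkabs2 : k ≤ |k| := le_abs_self k
  have hmnn : (0:ℤ) ≤ (m:ℤ) := Int.natCast_nonneg m
  have hnnn : (0:ℤ) ≤ (n:ℤ) := Int.natCast_nonneg n
  have hprod : |u| * m + |v| * n ≤ (|u| + |v|) * ((m:ℤ) + n) := by
    nlinarith [mul_nonneg hunn hnnn, mul_nonneg hvnn hmnn]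
  have hexp : (2*|k|+1) * s = 2 * ((|k|+1) * s) - s := by ring
  have hkss : (2*k+1) * s ≤ (2*|k|+1) * s :=
    mul_le_mul_of_nonneg_right (by omega) (by linarith)
  have hkss2 : -((2*|k|+1) * s) ≤ (2*k+1) * s := by
    have := mul_le_mul_of_nonneg_right (by omega : -(2*|k|+1) ≤ 2*k+1) (by linarith : (0:ℤ) ≤ s)
    linarith
  have hNpos : (0:ℤ) < N := by
    rw [hN]
    have h1 : 0 ≤ (|u| + |v|) * ((m:ℤ) + n) := mul_nonneg (by linarith) (by linarith)
    have h2 : 0 ≤ (|k| + 1) * s := mul_nonneg (by linarith) (by linarith)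
    linarith
  have hkey : a1z * x + a2z * y - a0z =
      2 * N * (Det A B X) - 2 * (u * (x - p) + v * (y - q)) + (2 * k + 1) * s := by
    rw [hDet, ha0, ha1, ha2, hs]; ring
  rcases lt_trichotomy (Det A B X) 0 with hD | hD | hD
  · -- Det < 0 : both sides false
    constructor
    · rintro (h | ⟨h, -⟩) <;> omega
    · intro h
      exfalso
      have hD1 : Det A B X ≤ -1 := by omega
      have hN2 : 2 * N * Det A B X ≤ -(2 * N) := by
        have := mul_le_mul_of_nonneg_left hD1 (by linarith : (0:ℤ) ≤ 2 * N)
        linarith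
      have hNval : N = (|u| + |v|) * ((m:ℤ) + n) + (|k| + 1) * s + 1 := hN
      linarith [hkey, hexp, hkss, hprod, hlb, hlb']
  · -- Det = 0
    obtain ⟨t, ht1, ht2⟩ := det_zero_param hco hD
    obtain ⟨ht1', ht2'⟩ := (hLpar t).mp ⟨ht1, ht2⟩
    have hxp : x - p = t * u := by omega
    have hyq : y - q = t * v := by omega
    have hval : a1z * x + a2z * y - a0z = (2 * k + 1 - 2 * t) * s := by
      rw [hkey, hD, hxp, hyq, hs]; ring
    constructor
    · rintro (h | ⟨-, t', hs1', hs2', ht'⟩)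
      · omega
      · obtain ⟨hu1, hu2⟩ := (hLpar t').mp ⟨hs1', hs2'⟩
        have htt : t = t' := by
          have huv0 : ¬(u = 0 ∧ v = 0) := by
            rintro ⟨e1, e2⟩; rw [e1, e2] at hs; simp at hs; omega
          rcases not_and_or.mp huv0 with hh | hh
          · exact mul_right_cancel₀ hh (by omega : t * u = t' * u)
          · exact mul_right_cancel₀ hh (by omega : t * v = t' * v)
        subst htt
        have hc : (2*k+1-2*t) ≤ (2*k+1-2*t) * s :=
          le_mul_of_one_le_right (by omega) hs1
        linarith [hval, hc]
    · intro h
      refine Or.inr ⟨hD, t, ht1, ht2, ?_⟩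
      by_contra hgt
      push_neg at hgt
      have hc1 : (2*k+1-2*t) ≤ -1 := by omega
      have hc : (2*k+1-2*t) * s ≤ (-1) * s := mul_le_mul_of_nonneg_right hc1 (by linarith)
      linarith [hval, hc]
  · -- Det > 0 : both sides true
    constructor
    · intro _
      have hD1 : (1:ℤ) ≤ Det A B X := hD
      have hN2 : 2 * N ≤ 2 * N * Det A B X := by
        have := mul_le_mul_of_nonneg_left hD1 (by linarith : (0:ℤ) ≤ 2 * N)
        linarith
      have hNval : N = (|u| + |v|) * ((m:ℤ) + n) + (|k| + 1) * s + 1 := hN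
      linarith [hkey, hexp, hkss2, hprod, hub, hub']
    · intro _
      exact Or.inl hD


/-- for a proper pair of segments {AB, CD} defining
f = f_AB ∧ f_CD, each of A, B, C, D is essential for f with respect to the
class of 2-threshold functions on the grid. -/
theorem stmt7 (m n : ℕ) (A B C D : ℤ × ℤ)
    (hA : A ∈ Grid m n) (hB : B ∈ Grid m n)
    (hC : C ∈ Grid m n) (hD : D ∈ Grid m n)
    (hprop : ProperPair A B C D) :
    ∀ P ∈ ({A, B, C, D} : Set (ℤ × ℤ)),
      ∃ g : ℤ × ℤ → Bool, Is2Threshold m n g ∧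
        g P = !(fseg A B P && fseg C D P) ∧
        ∀ X ∈ Grid m n, X ≠ P → g X = (fseg A B X && fseg C D X) := by
  obtain ⟨hAB, hCD, hCDA, hCDB, hABC, hABD⟩ := hprop
  have hthr : ∀ (E F : ℤ × ℤ), Adjacent E F → E ∈ Grid m n →
      IsThreshold m n (fseg E F) := by
    intro E F hadj hE
    obtain ⟨a0, a1, a2, h⟩ := Fk_threshold m n hadj hE 0
    exact ⟨a0, a1, a2, fun p hp => by rw [fseg_eq_Fk hadj]; exact h p hp⟩
  intro P hP
  simp only [Set.mem_insert_iff, Set.mem_singleton_iff] at hP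
  obtain h | h | h | h := hP <;> rw [h]
  · -- P = A
    refine ⟨fun X => Fk A B (-1) X && fseg C D X,
      ⟨Fk A B (-1), fseg C D, Fk_threshold m n hAB hA (-1), hthr C D hCD hC,
        fun p _ => rfl⟩, ?_, ?_⟩
    · show (Fk A B (-1) A && fseg C D A) = !(fseg A B A && fseg C D A)
      rw [Fk_negone_at_A hAB, fseg_at_A hAB.1, hCDA]
      rfl
    · intro X _ hXA
      show (Fk A B (-1) X && fseg C D X) = (fseg A B X && fseg C D X)
      rw [Fk_negone_agree hAB hXA]
  · -- P = B
    refine ⟨fun X => Fk A B 1 X && fseg C D X,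
      ⟨Fk A B 1, fseg C D, Fk_threshold m n hAB hA 1, hthr C D hCD hC,
        fun p _ => rfl⟩, ?_, ?_⟩
    · show (Fk A B 1 B && fseg C D B) = !(fseg A B B && fseg C D B)
      rw [Fk_one_at_B hAB, fseg_at_B hAB.1, hCDB]
      rfl
    · intro X _ hXB
      show (Fk A B 1 X && fseg C D X) = (fseg A B X && fseg C D X)
      rw [Fk_one_agree hAB hXB]
  · -- P = C
    refine ⟨fun X => fseg A B X && Fk C D (-1) X,
      ⟨fseg A B, Fk C D (-1), hthr A B hAB hA, Fk_threshold m n hCD hC (-1),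
        fun p _ => rfl⟩, ?_, ?_⟩
    · show (fseg A B C && Fk C D (-1) C) = !(fseg A B C && fseg C D C)
      rw [Fk_negone_at_A hCD, fseg_at_A hCD.1, hABC]
      rfl
    · intro X _ hXC
      show (fseg A B X && Fk C D (-1) X) = (fseg A B X && fseg C D X)
      rw [Fk_negone_agree hCD hXC]
  · -- P = D
    refine ⟨fun X => fseg A B X && Fk C D 1 X,
      ⟨fseg A B, Fk C D 1, hthr A B hAB hA, Fk_threshold m n hCD hC 1,
        fun p _ => rfl⟩, ?_, ?_⟩
    · show (fseg A B D && Fk C D 1 D) = !(fseg A B D && fseg C D D)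
      rw [Fk_one_at_B hCD, fseg_at_B hCD.1, hABD]
      rfl
    · intro X _ hXD
      show (fseg A B X && Fk C D 1 X) = (fseg A B X && fseg C D X)
      rw [Fk_one_agree hCD hXD]
end

section
/- Let {AB, CD} be a proper pair of oriented prime segments defining f = f_AB ∧ f_CD on the grid G. Then the segments AB and CD intersect if and only if the true set of f is the singleton {A} (in which case A = C). -/
@[simp] lemma toR_fst (p : ℤ×ℤ) : (toR p).1 = (p.1:ℝ) := rfl
@[simp] lemma toR_snd (p : ℤ×ℤ) : (toR p).2 = (p.2:ℝ) := rfl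

lemma fseg_iff (A B X : ℤ × ℤ) : fseg A B X = true ↔
    ((Det A B X = 0 ∧ (X.1 - A.1)^2 + (X.2 - A.2)^2 < (X.1 - B.1)^2 + (X.2 - B.2)^2)
      ∨ 0 < Det A B X) := by
  unfold fseg
  split <;> simp_all <;> omega

lemma det_nonneg_of_fseg {A B X : ℤ × ℤ} (h : fseg A B X = true) : 0 ≤ Det A B X := by
  rcases (fseg_iff A B X).mp h with ⟨h0, _⟩ | h0 <;> omega

lemma sq_sum_pos {a b : ℤ} (h : ¬(a = 0 ∧ b = 0)) : 0 < a^2 + b^2 := by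
  rcases not_and_or.mp h with ha | hb
  · have : 0 < a^2 := by positivity
    nlinarith [sq_nonneg b]
  · have : 0 < b^2 := by positivity
    nlinarith [sq_nonneg a]

lemma ne_iff_comp (A B : ℤ×ℤ) : A ≠ B ↔ ¬(B.1 - A.1 = 0 ∧ B.2 - A.2 = 0) := by
  rw [Ne, Prod.ext_iff, not_and_or, not_and_or]
  constructor <;> (rintro (h|h) <;> [left; right] <;> omega)

lemma fseg_fst {A B : ℤ×ℤ} (h : A ≠ B) : fseg A B A = true := by
  rw [fseg_iff]
  left
  constructor
  · simp [Det]
  · simp only [sub_self]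
    have := sq_sum_pos ((ne_iff_comp A B).mp h)
    nlinarith [sq_nonneg (A.1-B.1), sq_nonneg (A.2-B.2)]

lemma fseg_snd (A B : ℤ×ℤ) : fseg A B B = false := by
  have h0 : Det A B B = 0 := by simp [Det]; ring
  unfold fseg
  rw [if_pos h0]
  simp only [sub_self, decide_eq_false_iff_not, not_lt]
  positivity

lemma det_antisymm (A B X : ℤ×ℤ) : Det A X B = - Det A B X := by simp [Det]; ring

lemma segment_param {A B : ℤ×ℤ} {P : ℝ×ℝ} (h : P ∈ segment ℝ (toR A) (toR B)) :
    ∃ t : ℝ, 0 ≤ t ∧ t ≤ 1 ∧ P.1 = (A.1:ℝ) + t * ((B.1:ℝ) - (A.1:ℝ))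
      ∧ P.2 = (A.2:ℝ) + t * ((B.2:ℝ) - (A.2:ℝ)) := by
  rw [segment_eq_image'] at h
  obtain ⟨t, ht, rfl⟩ := h
  exact ⟨t, ht.1, ht.2, by simp, by simp⟩

lemma mem_segment_of_param (A B M : ℤ×ℤ) (t : ℝ) (h0 : 0 ≤ t) (h1 : t ≤ 1)
    (e1 : (M.1:ℝ) = (A.1:ℝ) + t * ((B.1:ℝ) - (A.1:ℝ)))
    (e2 : (M.2:ℝ) = (A.2:ℝ) + t * ((B.2:ℝ) - (A.2:ℝ))) :
    toR M ∈ segment ℝ (toR A) (toR B) := by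
  rw [segment_eq_image']
  refine ⟨t, ⟨h0, h1⟩, ?_⟩
  rw [Prod.ext_iff]
  constructor <;> simp [e1, e2]


lemma pair_eq {a b : ℤ} {P : ℤ×ℤ} (h : (a, b) = P) : a = P.1 ∧ b = P.2 := by
  rw [← h]; exact ⟨rfl, rfl⟩

lemma adjacent_coprime {A B : ℤ×ℤ} (h : Adjacent A B) :
    Int.gcd (B.1 - A.1) (B.2 - A.2) = 1 := by
  set u1 := B.1 - A.1 with hu1
  set u2 := B.2 - A.2 with hu2
  have hne : ¬(u1 = 0 ∧ u2 = 0) := by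
    rintro ⟨h1, h2⟩
    exact h.1 (Prod.ext (by omega) (by omega)).symm
  set g : ℕ := Int.gcd u1 u2 with hg
  have hg0 : g ≠ 0 := fun hh => hne (Int.gcd_eq_zero_iff.mp hh)
  obtain ⟨v1, hv1⟩ : (g:ℤ) ∣ u1 := Int.gcd_dvd_left u1 u2
  obtain ⟨v2, hv2⟩ : (g:ℤ) ∣ u2 := Int.gcd_dvd_right u1 u2
  have hgR : (g:ℝ) ≠ 0 := Nat.cast_ne_zero.mpr hg0
  have hg1 : (1:ℝ) ≤ (g:ℝ) := by exact_mod_cast Nat.one_le_iff_ne_zero.mpr hg0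
  have hmem := h.2 (A.1 + v1, A.2 + v2) (mem_segment_of_param A B _ (1/(g:ℝ))
    (by positivity) (by rw [div_le_one (by positivity)]; exact hg1)
    (by push_cast
        have : (B.1:ℝ) - A.1 = (g:ℝ) * (v1:ℝ) := by exact_mod_cast hv1
        rw [this]; field_simp)
    (by push_cast
        have : (B.2:ℝ) - A.2 = (g:ℝ) * (v2:ℝ) := by exact_mod_cast hv2
        rw [this]; field_simp))
  rcases hmem with hm | hm <;> obtain ⟨hm1, hm2⟩ := pair_eq hm
  · exfalso
    have hv10 : v1 = 0 := by omega
    have hv20 : v2 = 0 := by omega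
    rw [hv10] at hv1; rw [hv20] at hv2
    exact hne ⟨by omega, by omega⟩
  · have e1 : v1 = u1 := by omega
    have e2 : v2 = u2 := by omega
    rw [e1] at hv1; rw [e2] at hv2
    have h1 : ((g:ℤ) - 1) * u1 = 0 := by linear_combination -hv1
    have h2 : ((g:ℤ) - 1) * u2 = 0 := by linear_combination -hv2
    rcases mul_eq_zero.mp h1 with hh | hh
    · omega
    · rcases mul_eq_zero.mp h2 with hh2 | hh2
      · omega
      · exact absurd ⟨hh, hh2⟩ hne

lemma collinear_param {A B X : ℤ×ℤ} (hadj : Adjacent A B) (hdet : Det A B X = 0) :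
    ∃ r : ℤ, X.1 - A.1 = r * (B.1 - A.1) ∧ X.2 - A.2 = r * (B.2 - A.2) := by
  have hco := adjacent_coprime hadj
  set u1 := B.1 - A.1 with hu1
  set u2 := B.2 - A.2 with hu2
  have hd : u1 * (X.2 - A.2) = u2 * (X.1 - A.1) := by
    have : u1 * (X.2 - A.2) - u2 * (X.1 - A.1) = 0 := hdet
    linarith
  by_cases h1 : u1 = 0
  · have h2 : u2 = 1 ∨ u2 = -1 := by
      have : u2.natAbs = 1 := by
        rw [h1] at hco
        simpa [Int.gcd] using hco
      omega
    have hx1 : X.1 - A.1 = 0 := by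
      rw [h1] at hd
      simp at hd
      rcases hd with h | h
      · omega
      · exact h
    refine ⟨(X.2 - A.2) * u2, by rw [h1]; omega, ?_⟩
    rcases h2 with h | h <;> rw [h] <;> ring
  · have hdvd : u1 ∣ X.1 - A.1 := by
      have hcop : IsCoprime u1 u2 := Int.isCoprime_iff_gcd_eq_one.mpr hco
      exact hcop.dvd_of_dvd_mul_left ⟨X.2 - A.2, hd.symm⟩
    obtain ⟨r, hr⟩ := hdvd
    refine ⟨r, by linear_combination hr, ?_⟩
    have : u1 * (X.2 - A.2) = u1 * (r * u2) := by rw [hd, hr]; ring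
    have := mul_left_cancel₀ h1 this
    omega

lemma adj_step_pos {C D : ℤ×ℤ} (hadj : Adjacent C D) (u1 u2 k : ℤ)
    (hu : ¬(u1 = 0 ∧ u2 = 0)) (h1 : D.1 - C.1 = k * u1) (h2 : D.2 - C.2 = k * u2)
    (hk : 0 < k) : k = 1 := by
  have hk0 : k ≠ 0 := hk.ne'
  have hkR : (1:ℝ) ≤ (k:ℝ) := by exact_mod_cast hk
  have hkne : (k:ℝ) ≠ 0 := by exact_mod_cast hk0
  have hmem := hadj.2 (C.1 + u1, C.2 + u2) (mem_segment_of_param C D _ (1/(k:ℝ))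
    (by positivity) (by rw [div_le_one (by linarith)]; exact hkR)
    (by push_cast
        have : (D.1:ℝ) - C.1 = (k:ℝ) * (u1:ℝ) := by exact_mod_cast h1
        rw [this]; field_simp)
    (by push_cast
        have : (D.2:ℝ) - C.2 = (k:ℝ) * (u2:ℝ) := by exact_mod_cast h2
        rw [this]; field_simp))
  rcases hmem with hm | hm <;> obtain ⟨hm1, hm2⟩ := pair_eq hm
  · exact absurd ⟨by omega, by omega⟩ hu
  · have e1 : (k - 1) * u1 = 0 := by linear_combination -h1 - hm1
    have e2 : (k - 1) * u2 = 0 := by linear_combination -h2 - hm2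
    rcases mul_eq_zero.mp e1 with h | h
    · omega
    · rcases mul_eq_zero.mp e2 with h' | h'
      · omega
      · exact absurd ⟨h, h'⟩ hu

lemma adj_step {C D : ℤ×ℤ} (hadj : Adjacent C D) (u1 u2 k : ℤ)
    (hu : ¬(u1 = 0 ∧ u2 = 0)) (h1 : D.1 - C.1 = k * u1) (h2 : D.2 - C.2 = k * u2) :
    k = 1 ∨ k = -1 := by
  have hk0 : k ≠ 0 := by
    rintro rfl
    simp at h1 h2
    exact hadj.1 (Prod.ext (by omega) (by omega))
  rcases hk0.lt_or_gt with hk | hk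
  · right
    have := adj_step_pos hadj (-u1) (-u2) (-k) (by omega)
      (by linear_combination h1) (by linear_combination h2) (by omega)
    omega
  · exact Or.inl (adj_step_pos hadj u1 u2 k hu h1 h2 hk)

lemma convexZeroAux {x y b : ℝ} (hx : 0 ≤ x) (hy : 0 ≤ y) (hb0 : 0 ≤ b) (hb1 : b ≤ 1)
    (h : (1-b)*x + b*y = 0) : (b = 1 ∨ x = 0) ∧ (b = 0 ∨ y = 0) := by
  have h1 : (1-b)*x = 0 := by
    nlinarith [mul_nonneg hb0 hy, mul_nonneg (by linarith : (0:ℝ) ≤ 1-b) hx]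
  have h2 : b*y = 0 := by linarith
  constructor
  · rcases mul_eq_zero.mp h1 with h|h
    · left; linarith
    · right; exact h
  · rcases mul_eq_zero.mp h2 with h|h
    · left; exact h
    · right; exact h

lemma on_line_le {u1 u2 s : ℤ} (hu : ¬(u1 = 0 ∧ u2 = 0))
    (h : (s*u1)^2+(s*u2)^2 < (s*u1-u1)^2+(s*u2-u2)^2) : s ≤ 0 := by
  have hN := sq_sum_pos hu
  by_contra h'
  push_neg at h'
  nlinarith [hN]

lemma on_line_ge {u1 u2 r : ℤ} (hu : ¬(u1 = 0 ∧ u2 = 0))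
    (h : (r*u1)^2+(r*u2)^2 < (r*u1+u1)^2+(r*u2+u2)^2) : 0 ≤ r := by
  have hN := sq_sum_pos hu
  by_contra h'
  push_neg at h'
  nlinarith [hN]

lemma sq_norm_lt {u1 u2 s t : ℤ} (hu : ¬(u1 = 0 ∧ u2 = 0))
    (h : (s*u1)^2+(s*u2)^2 < (t*u1)^2+(t*u2)^2) : s^2 < t^2 := by
  have hN := sq_sum_pos hu
  by_contra h'
  push_neg at h'
  nlinarith [hN]

lemma step_down {s t : ℤ} (hs : s ≤ 0) (ht : t ≤ 0) (hst : t - s = 1 ∨ t - s = -1)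
    (h : s^2 < t^2) : t = s - 1 := by
  rcases hst with h'|h'
  · exfalso
    have he : t = s + 1 := by omega
    subst he
    nlinarith
  · omega

lemma algA (a1 a2 c1 c2 d1 d2 u1 u2 s t : ℤ)
    (hs1 : c1 - a1 = s*u1) (hs2 : c2 - a2 = s*u2)
    (ht1 : d1 - a1 = t*u1) (ht2 : d2 - a2 = t*u2) :
    (d1-c1)*(a2-c2) - (d2-c2)*(a1-c1) = 0 := by
  have e1 : c1 = a1 + s*u1 := by linarith
  have e2 : c2 = a2 + s*u2 := by linarith
  have e3 : d1 = a1 + t*u1 := by linarith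
  have e4 : d2 = a2 + t*u2 := by linarith
  subst e1 e2 e3 e4
  ring

lemma algB (a1 a2 c1 c2 d1 d2 u1 u2 s q : ℤ)
    (hq1 : a1 - c1 = q*(d1-c1)) (hq2 : a2 - c2 = q*(d2-c2))
    (hs1 : c1 - a1 = s*u1) (hs2 : c2 - a2 = s*u2) (hq : q ≠ 0) :
    u1*(d2-a2) - u2*(d1-a1) = 0 := by
  have hz : q*(u1*(d2-c2) - u2*(d1-c1)) = 0 := by
    linear_combination (-u1)*hq2 - u1*hs2 + u2*hq1 + u2*hs1
  have hbr := (mul_eq_zero.mp hz).resolve_left hq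
  linear_combination hbr + u1*hs2 - u2*hs1

lemma algC (a1 a2 c1 c2 d1 d2 u1 u2 t q : ℤ)
    (hq1 : a1 - c1 = q*(d1-c1)) (hq2 : a2 - c2 = q*(d2-c2))
    (ht1 : d1 - a1 = t*u1) (ht2 : d2 - a2 = t*u2) (hq : q ≠ 1) :
    u1*(c2-a2) - u2*(c1-a1) = 0 := by
  have hz : (1-q)*(u2*(d1-c1) - u1*(d2-c2)) = 0 := by
    linear_combination u2*ht1 + u2*hq1 - u1*ht2 - u1*hq2
  have hbr := (mul_eq_zero.mp hz).resolve_left (by omega : (1:ℤ) - q ≠ 0)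
  linear_combination q*hbr - u1*hq2 + u2*hq1
lemma key2 (A B D : ℤ×ℤ) (hAB : Adjacent A B) (hAD : Adjacent A D)
    (hfB : fseg A D B = true) (hfD : fseg A B D = true) (X : ℤ×ℤ) :
    (fseg A B X && fseg A D X) = true ↔ X = A := by
  have hu : ¬(B.1 - A.1 = 0 ∧ B.2 - A.2 = 0) := (ne_iff_comp A B).mp hAB.1
  have hanti : Det A D B = - Det A B D := det_antisymm A B D
  have hd0 : Det A B D = 0 := by
    have h1 := det_nonneg_of_fseg hfD
    have h2 := det_nonneg_of_fseg hfB
    omega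
  obtain ⟨t, ht1, ht2⟩ := collinear_param hAB hd0
  have hstep := adj_step hAD (B.1 - A.1) (B.2 - A.2) t hu ht1 ht2
  have hdist : (D.1 - A.1)^2 + (D.2 - A.2)^2 < (D.1 - B.1)^2 + (D.2 - B.2)^2 := by
    rcases (fseg_iff A B D).mp hfD with ⟨_, h⟩ | h
    · exact h
    · omega
  have hDB1 : D.1 - B.1 = t*(B.1-A.1) - (B.1-A.1) := by linarith
  have hDB2 : D.2 - B.2 = t*(B.2-A.2) - (B.2-A.2) := by linarith
  rw [ht1, ht2, hDB1, hDB2] at hdist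
  have htle : t ≤ 0 := on_line_le hu hdist
  have htm1 : t = -1 := by omega
  subst htm1
  have hAD1 : D.1 - A.1 = -(B.1 - A.1) := by linarith
  have hAD2 : D.2 - A.2 = -(B.2 - A.2) := by linarith
  constructor
  · intro h
    rw [Bool.and_eq_true] at h
    obtain ⟨hX1, hX2⟩ := h
    have hrel : Det A D X = - Det A B X := by
      simp only [Det]
      linear_combination (X.2 - A.2) * hAD1 - (X.1 - A.1) * hAD2
    have hz : Det A B X = 0 := by
      have g1 := det_nonneg_of_fseg hX1
      have g2 := det_nonneg_of_fseg hX2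
      omega
    have hz' : Det A D X = 0 := by omega
    obtain ⟨r, hr1, hr2⟩ := collinear_param hAB hz
    have hdX : (X.1 - A.1)^2 + (X.2 - A.2)^2 < (X.1 - B.1)^2 + (X.2 - B.2)^2 := by
      rcases (fseg_iff A B X).mp hX1 with ⟨_, h⟩ | h
      · exact h
      · omega
    have e1 : X.1 - B.1 = r*(B.1-A.1) - (B.1-A.1) := by linarith
    have e2 : X.2 - B.2 = r*(B.2-A.2) - (B.2-A.2) := by linarith
    rw [hr1, hr2, e1, e2] at hdX
    have hrle : r ≤ 0 := on_line_le hu hdX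
    have hdX' : (X.1 - A.1)^2 + (X.2 - A.2)^2 < (X.1 - D.1)^2 + (X.2 - D.2)^2 := by
      rcases (fseg_iff A D X).mp hX2 with ⟨_, h⟩ | h
      · exact h
      · omega
    have e3 : X.1 - D.1 = r*(B.1-A.1) + (B.1-A.1) := by linarith
    have e4 : X.2 - D.2 = r*(B.2-A.2) + (B.2-A.2) := by linarith
    rw [hr1, hr2, e3, e4] at hdX'
    have hrge : 0 ≤ r := on_line_ge hu hdX'
    have hr0 : r = 0 := by omega
    subst hr0
    simp only [zero_mul] at hr1 hr2
    exact Prod.ext (by omega) (by omega)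
  · rintro rfl
    rw [fseg_fst hAB.1, fseg_fst hAD.1]
    rfl
lemma key1 (A B C D : ℤ×ℤ) (hAB : Adjacent A B) (hCD : Adjacent C D)
    (hfA : fseg C D A = true) (hfB : fseg C D B = true)
    (hfC : fseg A B C = true) (hfD : fseg A B D = true)
    (hint : (segment ℝ (toR A) (toR B) ∩ segment ℝ (toR C) (toR D)).Nonempty) :
    A = C := by
  obtain ⟨P, hP1, hP2⟩ := hint
  obtain ⟨α, ha0, ha1, eA1, eA2⟩ := segment_param hP1
  obtain ⟨β, hb0, hb1, eC1, eC2⟩ := segment_param hP2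
  have hu : ¬(B.1 - A.1 = 0 ∧ B.2 - A.2 = 0) := (ne_iff_comp A B).mp hAB.1
  have hv : ¬(D.1 - C.1 = 0 ∧ D.2 - C.2 = 0) := (ne_iff_comp C D).mp hCD.1
  have E1 : (1-β) * (Det A B C : ℝ) + β * (Det A B D : ℝ) = 0 := by
    push_cast [Det]
    linear_combination ((B.2:ℝ)-A.2)*eC1 - ((B.1:ℝ)-A.1)*eC2 +
      ((B.1:ℝ)-A.1)*eA2 - ((B.2:ℝ)-A.2)*eA1
  have E2 : (1-α) * (Det C D A : ℝ) + α * (Det C D B : ℝ) = 0 := by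
    push_cast [Det]
    linear_combination ((D.2:ℝ)-C.2)*eA1 - ((D.1:ℝ)-C.1)*eA2 +
      ((D.1:ℝ)-C.1)*eC2 - ((D.2:ℝ)-C.2)*eC1
  have nC : (0:ℝ) ≤ (Det A B C:ℝ) := by exact_mod_cast det_nonneg_of_fseg hfC
  have nD : (0:ℝ) ≤ (Det A B D:ℝ) := by exact_mod_cast det_nonneg_of_fseg hfD
  have nA : (0:ℝ) ≤ (Det C D A:ℝ) := by exact_mod_cast det_nonneg_of_fseg hfA
  have nB : (0:ℝ) ≤ (Det C D B:ℝ) := by exact_mod_cast det_nonneg_of_fseg hfB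
  obtain ⟨hc1, hc2⟩ := convexZeroAux nC nD hb0 hb1 E1
  obtain ⟨hc3, hc4⟩ := convexZeroAux nA nB ha0 ha1 E2
  by_cases hABC : Det A B C = 0
  · by_cases hCDA : Det C D A = 0
    · -- both on each other's lines: collinear configuration or A = C
      by_cases hAC : A = C
      · exact hAC
      obtain ⟨s, hs1, hs2⟩ := collinear_param hAB hABC
      obtain ⟨q, hq1, hq2⟩ := collinear_param hCD hCDA
      have hqne : q ≠ 0 := by
        rintro rfl
        simp only [zero_mul] at hq1 hq2
        exact hAC (Prod.ext (by omega) (by omega))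
      have hABD : Det A B D = 0 := by
        have := algB A.1 A.2 C.1 C.2 D.1 D.2 (B.1-A.1) (B.2-A.2) s q hq1 hq2 hs1 hs2 hqne
        simp only [Det]
        linear_combination this
      obtain ⟨t, ht1, ht2⟩ := collinear_param hAB hABD
      have hk1 : D.1 - C.1 = (t-s)*(B.1-A.1) := by linear_combination ht1 - hs1
      have hk2 : D.2 - C.2 = (t-s)*(B.2-A.2) := by linear_combination ht2 - hs2
      have hstep := adj_step hCD _ _ _ hu hk1 hk2
      have hsle : s ≤ 0 := by
        rcases (fseg_iff A B C).mp hfC with ⟨_, h⟩|h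
        swap
        · omega
        have e1 : C.1 - B.1 = s*(B.1-A.1) - (B.1-A.1) := by linarith
        have e2 : C.2 - B.2 = s*(B.2-A.2) - (B.2-A.2) := by linarith
        rw [hs1, hs2, e1, e2] at h
        exact on_line_le hu h
      have htle : t ≤ 0 := by
        rcases (fseg_iff A B D).mp hfD with ⟨_, h⟩|h
        swap
        · omega
        have e1 : D.1 - B.1 = t*(B.1-A.1) - (B.1-A.1) := by linarith
        have e2 : D.2 - B.2 = t*(B.2-A.2) - (B.2-A.2) := by linarith
        rw [ht1, ht2, e1, e2] at h
        exact on_line_le hu h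
      have hslt : s^2 < t^2 := by
        rcases (fseg_iff C D A).mp hfA with ⟨_, h⟩|h
        swap
        · omega
        have e1 : A.1 - C.1 = (-s)*(B.1-A.1) := by linarith
        have e2 : A.2 - C.2 = (-s)*(B.2-A.2) := by linarith
        have e3 : A.1 - D.1 = (-t)*(B.1-A.1) := by linarith
        have e4 : A.2 - D.2 = (-t)*(B.2-A.2) := by linarith
        rw [e1, e2, e3, e4] at h
        have := sq_norm_lt hu h
        nlinarith [this]
      have hts : t = s - 1 := step_down hsle htle hstep hslt
      subst hts
      have rs1 : (C.1:ℝ) - A.1 = (s:ℝ)*((B.1:ℝ)-A.1) := by exact_mod_cast hs1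
      have rs2 : (C.2:ℝ) - A.2 = (s:ℝ)*((B.2:ℝ)-A.2) := by exact_mod_cast hs2
      have rd1 : (D.1:ℝ) - C.1 = -((B.1:ℝ)-A.1) := by
        have : D.1 - C.1 = -(B.1-A.1) := by linear_combination hk1
        exact_mod_cast this
      have rd2 : (D.2:ℝ) - C.2 = -((B.2:ℝ)-A.2) := by
        have : D.2 - C.2 = -(B.2-A.2) := by linear_combination hk2
        exact_mod_cast this
      have key1R : (α - (s:ℝ) + β) * ((B.1:ℝ) - A.1) = 0 := by
        linear_combination eC1 - eA1 + rs1 + β*rd1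
      have key2R : (α - (s:ℝ) + β) * ((B.2:ℝ) - A.2) = 0 := by
        linear_combination eC2 - eA2 + rs2 + β*rd2
      have habs : α - (s:ℝ) + β = 0 := by
        rcases not_and_or.mp hu with h | h
        · refine (mul_eq_zero.mp key1R).resolve_right (fun hh => h ?_)
          have : ((B.1 - A.1 : ℤ):ℝ) = 0 := by push_cast; linarith
          exact_mod_cast this
        · refine (mul_eq_zero.mp key2R).resolve_right (fun hh => h ?_)
          have : ((B.2 - A.2 : ℤ):ℝ) = 0 := by push_cast; linarith
          exact_mod_cast this
      have hs0 : s = 0 := by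
        have h1 : (0:ℝ) ≤ (s:ℝ) := by linarith
        have h2 : (0:ℤ) ≤ s := by exact_mod_cast h1
        omega
      subst hs0
      simp only [zero_mul] at hs1 hs2
      exact Prod.ext (by omega) (by omega)
    · -- Det A B C = 0, Det C D A > 0
      exfalso
      have hCDAne : (Det C D A : ℝ) ≠ 0 := fun hh => hCDA (by exact_mod_cast hh)
      have hα1 : α = 1 := hc3.resolve_right hCDAne
      rcases hc2 with hβ0 | hABD
      · -- P = toR B and P = toR C, so B = C
        have e1 : (B.1:ℝ) = C.1 := by rw [hα1] at eA1; rw [hβ0] at eC1; linarith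
        have e2 : (B.2:ℝ) = C.2 := by rw [hα1] at eA2; rw [hβ0] at eC2; linarith
        have hBC : B = C := Prod.ext (by exact_mod_cast e1) (by exact_mod_cast e2)
        rw [← hBC, fseg_snd] at hfC
        simp at hfC
      · have hABD' : Det A B D = 0 := by exact_mod_cast hABD
        obtain ⟨s, hs1, hs2⟩ := collinear_param hAB hABC
        obtain ⟨t, ht1, ht2⟩ := collinear_param hAB hABD'
        apply hCDA
        have := algA A.1 A.2 C.1 C.2 D.1 D.2 (B.1-A.1) (B.2-A.2) s t hs1 hs2 ht1 ht2
        simp only [Det]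
        linear_combination this
  · -- Det A B C > 0
    exfalso
    have hABCne : (Det A B C : ℝ) ≠ 0 := fun hh => hABC (by exact_mod_cast hh)
    have hβ1 : β = 1 := hc1.resolve_right hABCne
    have hABD : Det A B D = 0 := by
      rcases hc2 with h | h
      · rw [hβ1] at h; norm_num at h
      · exact_mod_cast h
    by_cases hCDA : Det C D A = 0
    · obtain ⟨q, hq1, hq2⟩ := collinear_param hCD hCDA
      by_cases hqo : q = 1
      · subst hqo
        simp only [one_mul] at hq1 hq2
        have hADeq : A = D := Prod.ext (by omega) (by omega)
        rw [← hADeq, fseg_snd] at hfA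
        simp at hfA
      · obtain ⟨t, ht1, ht2⟩ := collinear_param hAB hABD
        apply hABC
        have := algC A.1 A.2 C.1 C.2 D.1 D.2 (B.1-A.1) (B.2-A.2) t q hq1 hq2 ht1 ht2 hqo
        simp only [Det]
        linear_combination this
    · have hCDAne : (Det C D A : ℝ) ≠ 0 := fun hh => hCDA (by exact_mod_cast hh)
      have hα1 : α = 1 := hc3.resolve_right hCDAne
      have e1 : (B.1:ℝ) = D.1 := by rw [hα1] at eA1; rw [hβ1] at eC1; linarith
      have e2 : (B.2:ℝ) = D.2 := by rw [hα1] at eA2; rw [hβ1] at eC2; linarith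
      have hBD : B = D := Prod.ext (by exact_mod_cast e1) (by exact_mod_cast e2)
      rw [← hBD, fseg_snd] at hfB
      simp at hfB


/-- for a proper pair {AB, CD} defining f = f_AB ∧ f_CD on the
grid, the segments AB and CD intersect iff the true point set of f is the
singleton {A}; in which case A = C. -/
theorem stmt15 (m n : ℕ) (A B C D : ℤ × ℤ)
    (hA : A ∈ Grid m n) (hB : B ∈ Grid m n)
    (hC : C ∈ Grid m n) (hD : D ∈ Grid m n)
    (hprop : ProperPair A B C D) :
    ((segment ℝ (toR A) (toR B) ∩ segment ℝ (toR C) (toR D)).Nonempty ↔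
      ∀ X ∈ Grid m n, ((fseg A B X && fseg C D X) = true ↔ X = A)) ∧
    ((segment ℝ (toR A) (toR B) ∩ segment ℝ (toR C) (toR D)).Nonempty → A = C) := by
  obtain ⟨hAB, hCD, hfA, hfB, hfC, hfD⟩ := hprop
  have key := key1 A B C D hAB hCD hfA hfB hfC hfD
  constructor
  · constructor
    · intro hint
      have hAC := key hint
      subst hAC
      intro X _
      exact key2 A B D hAB hCD hfB hfD X
    · intro h
      have hCA : C = A := (h C hC).mp (by rw [hfC, fseg_fst hCD.1]; rfl)
      exact ⟨toR A, left_mem_segment ℝ _ _,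
        by rw [← hCA]; exact left_mem_segment ℝ (toR C) (toR D)⟩
  · exact key
end
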